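/- Let c = c(x²) be the Catalan generating function in x² and F(x,y) = c/(1 − x y c). Then (1/2)(x∂_x − y∂_y) F(x,y) = (c(c−1)/(2−c)) · 1/(1 − x y c)², as an identity of formal power series in x and y. -/

import Mathlib

/-- `c(x²)` as a two-variable formal power series (variables `x = X 0`, `y = X 1`),
where `c` is the Catalan generating function. -/
noncomputable def catalanX2 : MvPowerSeries (Fin 2) ℚ :=
  fun d => if d 1 = 0 ∧ d 0 % 2 = 0 then (Nat.choose (d 0) (d 0 / 2) : ℚ) / (d 0 / 2 + 1) else 0

/-- Formal partial derivative of a two-variable formal power series with respect to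
variable `s`. -/
noncomputable def pderiv (s : Fin 2) (f : MvPowerSeries (Fin 2) ℚ) :
    MvPowerSeries (Fin 2) ℚ :=
  fun d => ((d s : ℕ) + 1 : ℚ) * MvPowerSeries.coeff (d + Finsupp.single s 1) f

open MvPowerSeries in
/-- `F(x,y) = c(x²)/(1 − x y c(x²))`. -/
noncomputable def Fxy : MvPowerSeries (Fin 2) ℚ :=
  catalanX2 * (1 - X 0 * X 1 * catalanX2)⁻¹

open Finset MvPowerSeries

lemma coeff_pderiv (s : Fin 2) (f : MvPowerSeries (Fin 2) ℚ) (d : Fin 2 →₀ ℕ) :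
    MvPowerSeries.coeff d (pderiv s f) =
      ((d s : ℕ) + 1 : ℚ) * MvPowerSeries.coeff (d + Finsupp.single s 1) f := rfl

lemma sum_shift (s : Fin 2) (d : Fin 2 →₀ ℕ) (f g : MvPowerSeries (Fin 2) ℚ) :
    ∑ q ∈ antidiagonal (d + Finsupp.single s 1),
        (((q.1 : Fin 2 →₀ ℕ) s : ℕ) : ℚ) * (MvPowerSeries.coeff q.1 f * MvPowerSeries.coeff q.2 g)
      = ∑ p ∈ antidiagonal d,
          MvPowerSeries.coeff p.1 (pderiv s f) * MvPowerSeries.coeff p.2 g := by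
  set δ := Finsupp.single s 1 with hδ
  rw [← Finset.sum_filter_of_ne
      (p := fun q : (Fin 2 →₀ ℕ) × (Fin 2 →₀ ℕ) => q.1 s ≠ 0)
      (fun q _ hne hzero => hne (by rw [hzero, Nat.cast_zero, zero_mul]))]
  refine (Finset.sum_nbij' (fun p => (p.1 + δ, p.2)) (fun q => (q.1 - δ, q.2)) ?_ ?_ ?_ ?_ ?_).symm
  · intro p hp
    simp only [Finset.mem_filter, Finset.HasAntidiagonal.mem_antidiagonal] at hp ⊢
    refine ⟨by rw [← hp, add_right_comm], ?_⟩
    simp [hδ, Finsupp.add_apply, Finsupp.single_eq_same]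
  · intro q hq
    simp only [Finset.mem_filter, Finset.HasAntidiagonal.mem_antidiagonal] at hq
    obtain ⟨hsum, hne⟩ := hq
    have hle : δ ≤ q.1 := by
      rw [hδ, Finsupp.single_le_iff]; exact Nat.one_le_iff_ne_zero.mpr hne
    have h1 : q.1 - δ + δ + q.2 = d + δ := by rw [tsub_add_cancel_of_le hle, hsum]
    have h2 : q.1 - δ + q.2 + δ = d + δ := (add_right_comm _ _ _).trans h1
    simpa [Finset.HasAntidiagonal.mem_antidiagonal] using add_right_cancel h2
  · intro p hp
    simp only [add_tsub_cancel_right]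
  · intro q hq
    simp only [Finset.mem_filter, Finset.HasAntidiagonal.mem_antidiagonal] at hq
    have hle : δ ≤ q.1 := by
      rw [hδ, Finsupp.single_le_iff]; exact Nat.one_le_iff_ne_zero.mpr hq.2
    simp only [tsub_add_cancel_of_le hle]
  · intro p hp
    rw [_root_.coeff_pderiv]
    simp only [Finsupp.add_apply, hδ, Finsupp.single_eq_same]
    push_cast
    ring

lemma sum_shift₂ (s : Fin 2) (d : Fin 2 →₀ ℕ) (f g : MvPowerSeries (Fin 2) ℚ) :
    ∑ q ∈ antidiagonal (d + Finsupp.single s 1),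
        (((q.2 : Fin 2 →₀ ℕ) s : ℕ) : ℚ) * (MvPowerSeries.coeff q.1 f * MvPowerSeries.coeff q.2 g)
      = ∑ p ∈ antidiagonal d,
          MvPowerSeries.coeff p.1 f * MvPowerSeries.coeff p.2 (pderiv s g) := by
  set δ := Finsupp.single s 1 with hδ
  rw [← Finset.sum_filter_of_ne
      (p := fun q : (Fin 2 →₀ ℕ) × (Fin 2 →₀ ℕ) => q.2 s ≠ 0)
      (fun q _ hne hzero => hne (by rw [hzero, Nat.cast_zero, zero_mul]))]
  refine (Finset.sum_nbij' (fun p => (p.1, p.2 + δ)) (fun q => (q.1, q.2 - δ)) ?_ ?_ ?_ ?_ ?_).symm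
  · intro p hp
    simp only [Finset.mem_filter, Finset.HasAntidiagonal.mem_antidiagonal] at hp ⊢
    refine ⟨by rw [← add_assoc, hp], ?_⟩
    simp [hδ, Finsupp.add_apply, Finsupp.single_eq_same]
  · intro q hq
    simp only [Finset.mem_filter, Finset.HasAntidiagonal.mem_antidiagonal] at hq
    obtain ⟨hsum, hne⟩ := hq
    have hle : δ ≤ q.2 := by
      rw [hδ, Finsupp.single_le_iff]; exact Nat.one_le_iff_ne_zero.mpr hne
    have h1 : q.1 + (q.2 - δ) + δ = d + δ := by
      rw [add_assoc, tsub_add_cancel_of_le hle, hsum]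
    simpa [Finset.HasAntidiagonal.mem_antidiagonal] using add_right_cancel h1
  · intro p hp
    simp only [add_tsub_cancel_right]
  · intro q hq
    simp only [Finset.mem_filter, Finset.HasAntidiagonal.mem_antidiagonal] at hq
    have hle : δ ≤ q.2 := by
      rw [hδ, Finsupp.single_le_iff]; exact Nat.one_le_iff_ne_zero.mpr hq.2
    simp only [tsub_add_cancel_of_le hle]
  · intro p hp
    rw [_root_.coeff_pderiv]
    simp only [Finsupp.add_apply, hδ, Finsupp.single_eq_same]
    push_cast
    ring

lemma pderiv_mul (s : Fin 2) (f g : MvPowerSeries (Fin 2) ℚ) :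
    pderiv s (f * g) = pderiv s f * g + f * pderiv s g := by
  ext d
  rw [map_add, coeff_pderiv, MvPowerSeries.coeff_mul, MvPowerSeries.coeff_mul,
    MvPowerSeries.coeff_mul, Finset.mul_sum]
  rw [← sum_shift s d f g, ← sum_shift₂ s d f g, ← Finset.sum_add_distrib]
  refine Finset.sum_congr rfl fun q hq => ?_
  rw [Finset.HasAntidiagonal.mem_antidiagonal] at hq
  have h := DFunLike.congr_fun hq s
  simp only [Finsupp.add_apply, Finsupp.single_eq_same] at h
  have h2 : ((q.1 s : ℚ)) + (q.2 s : ℚ) = (d s : ℚ) + 1 := by exact_mod_cast h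
  rw [← add_mul, h2]

noncomputable def iota (f : PowerSeries ℚ) : MvPowerSeries (Fin 2) ℚ :=
  fun d => if d 1 = 0 ∧ d 0 % 2 = 0 then PowerSeries.coeff (d 0 / 2) f else 0

lemma coeff_iota (f : PowerSeries ℚ) (d : Fin 2 →₀ ℕ) :
    MvPowerSeries.coeff d (iota f) =
      if d 1 = 0 ∧ d 0 % 2 = 0 then PowerSeries.coeff (d 0 / 2) f else 0 := rfl

lemma finsupp_eq_single (d : Fin 2 →₀ ℕ) (h : d 1 = 0) : d = Finsupp.single 0 (d 0) := by
  ext i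
  fin_cases i
  · simp
  · simpa using h

lemma iota_one : iota 1 = 1 := by
  ext d
  rw [MvPowerSeries.coeff_one, coeff_iota]
  by_cases hd : d = 0
  · subst hd; simp
  · rw [if_neg hd]
    by_cases h1 : d 1 = 0
    · by_cases h2 : d 0 % 2 = 0
      · rw [if_pos ⟨h1, h2⟩]
        have hd0 : d 0 ≠ 0 := by
          intro h0
          exact hd (by rw [finsupp_eq_single d h1, h0, Finsupp.single_zero])
        rw [PowerSeries.coeff_one, if_neg (by omega)]
      · rw [if_neg (by tauto)]
    · rw [if_neg (by tauto)]

lemma iota_add (f g : PowerSeries ℚ) : iota (f + g) = iota f + iota g := by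
  ext d
  rw [map_add, coeff_iota, coeff_iota, coeff_iota, map_add]
  split <;> simp

lemma single_app_one (i : ℕ) : (Finsupp.single (0 : Fin 2) i) 1 = 0 :=
  Finsupp.single_eq_of_ne (by decide)

lemma iota_mul (f g : PowerSeries ℚ) : iota (f * g) = iota f * iota g := by
  ext d
  rw [MvPowerSeries.coeff_mul, coeff_iota]
  by_cases h1 : d 1 = 0
  · by_cases h2 : d 0 % 2 = 0
    · rw [if_pos ⟨h1, h2⟩]
      have hd : d = Finsupp.single 0 (d 0) := finsupp_eq_single d h1
      set n := d 0 with hn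
      set m := n / 2 with hm
      rw [PowerSeries.coeff_mul]
      conv_rhs => rw [hd]
      rw [Finsupp.antidiagonal_single, Finset.sum_map]
      simp only [Function.Embedding.coe_prodMap, Function.Embedding.coeFn_mk, Prod.map_fst, Prod.map_snd]
      have hterm : ∀ ij : ℕ × ℕ,
          (MvPowerSeries.coeff (Finsupp.single 0 ij.1) (iota f)) *
            (MvPowerSeries.coeff (Finsupp.single 0 ij.2) (iota g))
          = (if ij.1 % 2 = 0 then PowerSeries.coeff (ij.1 / 2) f else 0) *
            (if ij.2 % 2 = 0 then PowerSeries.coeff (ij.2 / 2) g else 0) := by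
        intro ij
        rw [coeff_iota, coeff_iota, single_app_one, single_app_one]
        simp only [Finsupp.single_eq_same, eq_self_iff_true, true_and]
      rw [Finset.sum_congr rfl fun ij _ => hterm ij]
      rw [Finset.Nat.sum_antidiagonal_eq_sum_range_succ_mk,
        Finset.Nat.sum_antidiagonal_eq_sum_range_succ_mk]
      conv_rhs => rw [← Finset.sum_filter_of_ne (p := fun i => i % 2 = 0)
        (by
          intro i hi hne
          by_contra hodd
          rw [if_neg hodd] at hne
          simp at hne)]
      refine Finset.sum_nbij' (fun k => 2 * k) (fun i => i / 2) ?_ ?_ ?_ ?_ ?_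
      · intro k hk
        rw [Finset.mem_range] at hk
        rw [Finset.mem_filter, Finset.mem_range]
        omega
      · intro i hi
        rw [Finset.mem_filter, Finset.mem_range] at hi
        rw [Finset.mem_range]
        omega
      · intro k _; omega
      · intro i hi
        rw [Finset.mem_filter] at hi
        omega
      · intro k hk
        rw [Finset.mem_range] at hk
        rw [if_pos (by omega), if_pos (by omega)]
        have e1 : 2 * k / 2 = k := by omega
        have e2 : (n - 2 * k) / 2 = m - k := by omega
        rw [e1, e2]
    · rw [if_neg (by tauto)]
      refine (Finset.sum_eq_zero ?_).symm
      intro p hp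
      rw [Finset.HasAntidiagonal.mem_antidiagonal] at hp
      have h0 := DFunLike.congr_fun hp (0 : Fin 2)
      have h1' := DFunLike.congr_fun hp (1 : Fin 2)
      simp only [Finsupp.add_apply] at h0 h1'
      rw [coeff_iota, coeff_iota]
      by_cases hp1 : p.1 1 = 0
      · by_cases hp2 : p.1 0 % 2 = 0
        · rw [if_neg (show ¬((p.2 : Fin 2 →₀ ℕ) 1 = 0 ∧ (p.2 : Fin 2 →₀ ℕ) 0 % 2 = 0) from
            fun hcon => h2 (by omega))]
          ring
        · rw [if_neg (by tauto)]; ring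
      · rw [if_neg (by tauto)]; ring
  · rw [if_neg (by tauto)]
    refine (Finset.sum_eq_zero ?_).symm
    intro p hp
    rw [Finset.HasAntidiagonal.mem_antidiagonal] at hp
    have h1' := DFunLike.congr_fun hp (1 : Fin 2)
    simp only [Finsupp.add_apply] at h1'
    rw [coeff_iota, coeff_iota]
    by_cases hp1 : p.1 1 = 0
    · rw [if_neg (show ¬((p.2 : Fin 2 →₀ ℕ) 1 = 0 ∧ (p.2 : Fin 2 →₀ ℕ) 0 % 2 = 0) from
        fun hcon => h1 (by omega))]
      ring
    · rw [if_neg (by tauto)]; ring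

lemma iota_X : iota PowerSeries.X = (X 0 : MvPowerSeries (Fin 2) ℚ) ^ 2 := by
  ext d
  rw [MvPowerSeries.coeff_X_pow, coeff_iota]
  by_cases h1 : d 1 = 0
  · by_cases h2 : d 0 % 2 = 0
    · rw [if_pos ⟨h1, h2⟩, PowerSeries.coeff_X]
      by_cases h3 : d 0 / 2 = 1
      · rw [if_pos h3, if_pos]
        rw [finsupp_eq_single d h1]
        congr 1
        omega
      · rw [if_neg h3, if_neg]
        intro hcon
        have := DFunLike.congr_fun hcon (0 : Fin 2)
        simp [Finsupp.single_eq_same] at this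
        omega
    · rw [if_neg (by tauto), if_neg]
      intro hcon
      have := DFunLike.congr_fun hcon (0 : Fin 2)
      simp [Finsupp.single_eq_same] at this
      omega
  · rw [if_neg (by tauto), if_neg]
    intro hcon
    have := DFunLike.congr_fun hcon (1 : Fin 2)
    simp [single_app_one] at this
    exact h1 this


/-- The one-variable Catalan generating function. -/
noncomputable def catPS : PowerSeries ℚ := PowerSeries.mk fun n => (catalan n : ℚ)

lemma catPS_eq : catPS = 1 + PowerSeries.X * (catPS * catPS) := by
  ext n
  cases n with
  | zero => simp [catPS]
  | succ n =>
    rw [map_add, PowerSeries.coeff_succ_X_mul, catPS, PowerSeries.coeff_mk,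
      PowerSeries.coeff_one, if_neg (Nat.succ_ne_zero n), zero_add, PowerSeries.coeff_mul]
    rw [catalan_succ']
    push_cast
    exact Finset.sum_congr rfl fun p _ => by rw [PowerSeries.coeff_mk, PowerSeries.coeff_mk]

lemma catalanX2_eq_iota : catalanX2 = iota catPS := by
  funext d
  show (if d 1 = 0 ∧ d 0 % 2 = 0 then ((d 0).choose (d 0 / 2) : ℚ) / (d 0 / 2 + 1) else 0)
    = if d 1 = 0 ∧ d 0 % 2 = 0 then PowerSeries.coeff (d 0 / 2) catPS else 0
  by_cases h : d 1 = 0 ∧ d 0 % 2 = 0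
  · rw [if_pos h, if_pos h, catPS, PowerSeries.coeff_mk]
    set m := d 0 / 2 with hm
    have h2m : 2 * m = d 0 := by omega
    have hcent := succ_mul_catalan_eq_centralBinom m
    rw [Nat.centralBinom] at hcent
    rw [← h2m, div_eq_iff (by positivity)]
    have hq : ((2 * m : ℕ) : ℚ) / 2 + 1 = ((m + 1 : ℕ) : ℚ) := by push_cast; ring
    rw [hq, ← Nat.cast_mul]
    exact_mod_cast (by rw [← hcent]; ring : (2 * m).choose m = catalan m * (m + 1))
  · rw [if_neg h, if_neg h]

lemma catalanX2_func_eq :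
    catalanX2 = 1 + (MvPowerSeries.X 0 : MvPowerSeries (Fin 2) ℚ) ^ 2
      * (catalanX2 * catalanX2) := by
  conv_lhs => rw [catalanX2_eq_iota, catPS_eq]
  rw [iota_add, iota_one, iota_mul, iota_mul, iota_X, ← catalanX2_eq_iota]

lemma pderiv_add (s : Fin 2) (f g : MvPowerSeries (Fin 2) ℚ) :
    pderiv s (f + g) = pderiv s f + pderiv s g := by
  ext d
  rw [map_add, coeff_pderiv, coeff_pderiv, coeff_pderiv, map_add, mul_add]

lemma pderiv_sub (s : Fin 2) (f g : MvPowerSeries (Fin 2) ℚ) :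
    pderiv s (f - g) = pderiv s f - pderiv s g := by
  ext d
  rw [map_sub, coeff_pderiv, coeff_pderiv, coeff_pderiv, map_sub, mul_sub]

lemma pderiv_one (s : Fin 2) : pderiv s (1 : MvPowerSeries (Fin 2) ℚ) = 0 := by
  ext d
  rw [coeff_pderiv, MvPowerSeries.coeff_one, if_neg, mul_zero, map_zero]
  intro h
  have := DFunLike.congr_fun h s
  simp [Finsupp.add_apply, Finsupp.single_eq_same] at this

lemma pderiv_X_same (s : Fin 2) : pderiv s (X s : MvPowerSeries (Fin 2) ℚ) = 1 := by
  ext d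
  rw [coeff_pderiv, MvPowerSeries.coeff_X, MvPowerSeries.coeff_one]
  by_cases hd : d = 0
  · subst hd; simp
  · rw [if_neg, if_neg hd, mul_zero]
    intro h
    apply hd
    have : d + Finsupp.single s 1 = 0 + Finsupp.single s 1 := by rw [h, zero_add]
    exact add_right_cancel this
  
lemma pderiv_X_ne (s t : Fin 2) (h : s ≠ t) :
    pderiv s (X t : MvPowerSeries (Fin 2) ℚ) = 0 := by
  ext d
  rw [coeff_pderiv, MvPowerSeries.coeff_X, if_neg, mul_zero, map_zero]
  intro hEq
  have := DFunLike.congr_fun hEq s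
  simp [Finsupp.add_apply, Finsupp.single_eq_same, Finsupp.single_eq_of_ne' (Ne.symm h)] at this

lemma pderiv_one_catalanX2 : pderiv 1 catalanX2 = 0 := by
  ext d
  rw [coeff_pderiv, map_zero]
  have : MvPowerSeries.coeff (d + Finsupp.single 1 1) catalanX2 = 0 := by
    rw [MvPowerSeries.coeff_apply]
    simp only [catalanX2]
    rw [if_neg]
    rintro ⟨h1, -⟩
    simp [Finsupp.add_apply, Finsupp.single_eq_same] at h1
  rw [this, mul_zero]

lemma constantCoeff_catalanX2 : MvPowerSeries.constantCoeff catalanX2 = 1 := by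
  rw [← MvPowerSeries.coeff_zero_eq_constantCoeff, MvPowerSeries.coeff_apply]
  simp [catalanX2]

open MvPowerSeries in
/-- `(1/2)(x∂_x − y∂_y) F(x,y) = (c(c−1)/(2−c))·1/(1 − x y c)²` with `c = c(x²)`. -/
theorem half_euler_deriv_F :
    (1 / 2 : ℚ) • (X 0 * pderiv 0 Fxy - X 1 * pderiv 1 Fxy) =
      catalanX2 * (catalanX2 - 1) * (2 - catalanX2)⁻¹ *
        ((1 - X 0 * X 1 * catalanX2)⁻¹) ^ 2 := by
  set c := catalanX2 with hc
  have hune : constantCoeff (1 - X 0 * X 1 * c) ≠ 0 := by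
    rw [map_sub, map_one, map_mul, map_mul, constantCoeff_X, constantCoeff_X]
    norm_num
  have hvne : constantCoeff (2 - c) ≠ 0 := by
    rw [map_sub, hc, constantCoeff_catalanX2, map_ofNat]
    norm_num
  have huF : Fxy * (1 - X 0 * X 1 * c) = c := by
    rw [Fxy, mul_assoc, MvPowerSeries.inv_mul_cancel _ hune, mul_one]
  have E0 : pderiv 0 Fxy * (1 - X 0 * X 1 * c) + Fxy * pderiv 0 (1 - X 0 * X 1 * c)
      = pderiv 0 c := by rw [← pderiv_mul, huF]
  have E1 : pderiv 1 Fxy * (1 - X 0 * X 1 * c) + Fxy * pderiv 1 (1 - X 0 * X 1 * c)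
      = 0 := by rw [← pderiv_mul, huF, hc, pderiv_one_catalanX2]
  have hu0 : pderiv 0 (1 - X 0 * X 1 * c) = -(X 1 * c + X 0 * X 1 * pderiv 0 c) := by
    rw [pderiv_sub, pderiv_one, pderiv_mul, pderiv_mul, pderiv_X_same,
      pderiv_X_ne 0 1 (by decide)]
    ring
  have hu1 : pderiv 1 (1 - X 0 * X 1 * c) = -(X 0 * c) := by
    rw [pderiv_sub, pderiv_one, pderiv_mul, pderiv_mul, pderiv_X_same,
      pderiv_X_ne 1 0 (by decide), hc, pderiv_one_catalanX2]
    ring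
  have hx2 : (X 0 : MvPowerSeries (Fin 2) ℚ) ^ 2 * (c * c) = c - 1 := by
    conv_rhs => rw [hc, catalanX2_func_eq]
    ring
  have hD : pderiv 0 c = (1 * X 0 + X 0 * 1) * (c * c)
      + (X 0 * X 0) * (pderiv 0 c * c + c * pderiv 0 c) := by
    conv_lhs => rw [hc, catalanX2_func_eq]
    rw [pderiv_add, pderiv_one, sq, pderiv_mul, pderiv_mul (0 : Fin 2) c c,
      pderiv_mul, pderiv_X_same]
    ring
  have hKey : (2 - c) * pderiv 0 c = 2 * X 0 * (c * c * c) := by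
    linear_combination c * hD + 2 * pderiv 0 c * hx2
  have s1 : pderiv 0 Fxy * (1 - X 0 * X 1 * c)
      = pderiv 0 c + Fxy * (X 1 * c + X 0 * X 1 * pderiv 0 c) := by
    linear_combination E0 - Fxy * hu0
  have s2 : pderiv 1 Fxy * (1 - X 0 * X 1 * c) = Fxy * (X 0 * c) := by
    linear_combination E1 - Fxy * hu1
  have s3 : (X 0 * pderiv 0 Fxy - X 1 * pderiv 1 Fxy) * (1 - X 0 * X 1 * c) ^ 2
      = X 0 * pderiv 0 c := by
    linear_combination (X 0 * (1 - X 0 * X 1 * c)) * s1 - (X 1 * (1 - X 0 * X 1 * c)) * s2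
      + (X 0 ^ 2 * X 1 * pderiv 0 c) * huF
  have s4 : (X 0 * pderiv 0 Fxy - X 1 * pderiv 1 Fxy)
      * ((1 - X 0 * X 1 * c) ^ 2 * (2 - c)) = 2 * (c * (c - 1)) := by
    linear_combination (2 - c) * s3 + X 0 * hKey + 2 * c * hx2
  have hne : ((1 - X 0 * X 1 * c) ^ 2 * (2 - c) : MvPowerSeries (Fin 2) ℚ) ≠ 0 := by
    apply mul_ne_zero (pow_ne_zero _ _)
    · intro h; rw [h, map_zero] at hvne; exact hvne rfl
    · intro h; rw [h, map_zero] at hune; exact hune rfl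
  apply mul_right_cancel₀ hne
  have hL : ((1 / 2 : ℚ) • (X 0 * pderiv 0 Fxy - X 1 * pderiv 1 Fxy))
      * ((1 - X 0 * X 1 * c) ^ 2 * (2 - c)) = c * (c - 1) := by
    rw [smul_mul_assoc, s4, two_mul, smul_add, ← add_smul]
    norm_num
  rw [hL]
  have h1 : ((1 - X 0 * X 1 * c)⁻¹) ^ 2 * (1 - X 0 * X 1 * c) ^ 2
      = (1 : MvPowerSeries (Fin 2) ℚ) := by
    rw [← mul_pow, MvPowerSeries.inv_mul_cancel _ hune, one_pow]
  have h2 : (2 - c)⁻¹ * (2 - c) = (1 : MvPowerSeries (Fin 2) ℚ) :=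
    MvPowerSeries.inv_mul_cancel _ hvne
  calc c * (c - 1)
      = c * (c - 1) * (((2 - c)⁻¹ * (2 - c))
        * (((1 - X 0 * X 1 * c)⁻¹) ^ 2 * (1 - X 0 * X 1 * c) ^ 2)) := by rw [h1, h2]; ring
    _ = c * (c - 1) * (2 - c)⁻¹ * ((1 - X 0 * X 1 * c)⁻¹) ^ 2
        * ((1 - X 0 * X 1 * c) ^ 2 * (2 - c)) := by ring
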